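/- (Reduction to finitely many inequalities.) The region cut out over nonnegative weight vectors is already cut out by the finitely many weight vectors in W^N: {x ∈ ℝ^N : x_n ≥ 0 for all n, and Σ_{n=1}^N α_n x_n ≤ b(α) for every α ∈ ℝ^N with nonnegative entries} = {x ∈ ℝ^N : x_n ≥ 0 for all n, and Σ_{n=1}^N α_n x_n ≤ b(α) for every α ∈ W^N}. -/

import Mathlib

open MeasureTheory ProbabilityTheory Finset Filter

noncomputable section

/-- Channel state space `S`: N×K matrices with entries in {0,…,M}. -/
abbrev ChanState (N K M : ℕ) := Fin N → Fin K → Fin (M + 1)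

/-- The real-valued channel matrix `C_s` of a channel state `s`. -/
def Cmat {N K M : ℕ} (s : ChanState N K M) : Fin N → Fin K → ℝ :=
  fun n k => ((s n k : ℕ) : ℝ)

/-- The 0/1 allocation matrix `I ∈ 𝓘` determined by an assignment `f` of servers to
queues: column `k` has its single 1 in row `f k`. -/
def allocMat {N K : ℕ} (f : Fin K → Fin N) : Fin N → Fin K → ℝ :=
  fun n k => if f k = n then 1 else 0

/-- The weight `Σ_n Σ_k α_n c_{n,k} I_{n,k}` of the allocation matrix `I = allocMat f`. -/
def weight {N K : ℕ} (α : Fin N → ℝ) (c : Fin N → Fin K → ℝ) (f : Fin K → Fin N) : ℝ :=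
  ∑ n, ∑ k, α n * c n k * allocMat f n k

/-- `max_{I ∈ 𝓘} Σ_n Σ_k α_n c_{n,k} I_{n,k}`. -/
def maxWeight {N K : ℕ} [NeZero N] (α : Fin N → ℝ) (c : Fin N → Fin K → ℝ) : ℝ :=
  Finset.univ.sup' Finset.univ_nonempty (weight α c)

/-- `b(α) = Σ_{s∈S} π_s max_{I∈𝓘} Σ_n Σ_k α_n (C_s)_{n,k} I_{n,k}`. -/
def bCoef {N K M : ℕ} [NeZero N] (π : ChanState N K M → ℝ) (α : Fin N → ℝ) : ℝ :=
  ∑ s : ChanState N K M, π s * maxWeight α (Cmat s)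

/-- The rate vector `R^{(g)}` of the deterministic policy `g`. -/
def rateVec {N K M : ℕ} (π : ChanState N K M → ℝ)
    (g : ChanState N K M → Fin K → Fin N) : Fin N → ℝ :=
  fun n => ∑ s : ChanState N K M, π s * ∑ k, Cmat s n k * allocMat (g s) n k

/-- The achievable-rate polytope `P`, the convex hull of the rate vectors of the
deterministic policies. -/
def ratePolytope {N K M : ℕ} (π : ChanState N K M → ℝ) : Set (Fin N → ℝ) :=
  convexHull ℝ {r | ∃ g : ChanState N K M → Fin K → Fin N, r = rateVec π g}

/-- `W`: products of N−1 factors from {0,…,M}, viewed inside ℝ. -/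
def Wset (N M : ℕ) : Set ℝ :=
  {w | ∃ m : Fin (N - 1) → ℕ, (∀ j, m j ≤ M) ∧ w = ∏ j, (m j : ℝ)}

/-- The set `V` of nonnegative weight vectors from the paper. -/
def Vset (N M : ℕ) : Set (Fin N → ℝ) :=
  {α | (∀ n, 0 ≤ α n) ∧
    ∀ U : Finset (Fin N), U.Nonempty → U ≠ Finset.univ →
      (∃ i ∈ U, α i ≠ 0) → (∃ j ∈ Uᶜ, α j ≠ 0) →
      ∃ i ∈ U, ∃ j ∈ Uᶜ, ∃ m ∈ Finset.Icc 1 M, ∃ n ∈ Finset.Icc 1 M,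
        0 < α i ∧ 0 < α j ∧ α i * (m : ℝ) = α j * (n : ℝ)}

/-- The product Bernoulli distribution on ON-OFF (M = 1) channel states. -/
def bernoulliPi {N K : ℕ} (p : Fin N → Fin K → ℝ) : ChanState N K 1 → ℝ :=
  fun s => ∏ n, ∏ k, (if (s n k : ℕ) = 1 then p n k else 1 - p n k)

end

namespace Stmt13

open Finset

/-- The cone of vectors compatible with the comparison pattern of `α`. -/
def sig (M : ℕ) {N : ℕ} (α : Fin N → ℝ) : Set (Fin N → ℝ) :=
  {β | ∀ i j : Fin N, ∀ m m' : ℕ, m ≤ M → m' ≤ M →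
    α j * (m' : ℝ) ≤ α i * (m : ℝ) → β j * (m' : ℝ) ≤ β i * (m : ℝ)}

lemma self_mem_sig {M N : ℕ} (α : Fin N → ℝ) : α ∈ sig M α :=
  fun _ _ _ _ _ _ h => h

lemma sig_trans {M N : ℕ} {α α' β : Fin N → ℝ} (h1 : α' ∈ sig M α) (h2 : β ∈ sig M α') :
    β ∈ sig M α :=
  fun i j m m' hm hm' h => h2 i j m m' hm hm' (h1 i j m m' hm hm' h)

lemma smul_mem_sig {M N : ℕ} {α β : Fin N → ℝ} (h : β ∈ sig M α) {c : ℝ} (hc : 0 ≤ c) :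
    c • β ∈ sig M α := by
  intro i j m m' hm hm' hij
  have := h i j m m' hm hm' hij
  simp only [Pi.smul_apply, smul_eq_mul]
  calc c * β j * (m' : ℝ) = c * (β j * m') := by ring
    _ ≤ c * (β i * m) := by exact mul_le_mul_of_nonneg_left this hc
    _ = c * β i * m := by ring

/-- number of strictly-compared pairs -/
noncomputable def dcount (M : ℕ) {N : ℕ} (α : Fin N → ℝ) : ℕ :=
  (Finset.univ.filter (fun q : Fin N × Fin N × Fin (M+1) × Fin (M+1) =>
    α q.2.1 * ((q.2.2.2 : ℕ) : ℝ) < α q.1 * ((q.2.2.1 : ℕ) : ℝ))).card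

lemma dcount_lt {M N : ℕ} {α α' : Fin N → ℝ} (h : α' ∈ sig M α)
    (i j : Fin N) (m m' : ℕ) (hm : m ≤ M) (hm' : m' ≤ M)
    (hstrict : α j * (m' : ℝ) < α i * (m : ℝ))
    (hflat : ¬ (α' j * (m' : ℝ) < α' i * (m : ℝ))) :
    dcount M α' < dcount M α := by
  classical
  apply Finset.card_lt_card
  rw [Finset.ssubset_iff_of_subset]
  · refine ⟨(i, j, ⟨m, by omega⟩, ⟨m', by omega⟩), ?_, ?_⟩
    · simp [hstrict]
    · simp [hflat]
  · intro q hq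
    simp only [Finset.mem_filter, Finset.mem_univ, true_and] at hq ⊢
    by_contra hc
    push_neg at hc
    exact absurd (h q.2.1 q.1 (q.2.2.2 : ℕ) (q.2.2.1 : ℕ)
      (Nat.lt_succ_iff.mp q.2.2.2.isLt) (Nat.lt_succ_iff.mp q.2.2.1.isLt) hc) (not_le.mpr hq)

end Stmt13
namespace Stmt13

open Finset

lemma weight_eq {N K : ℕ} (α : Fin N → ℝ) (c : Fin N → Fin K → ℝ) (f : Fin K → Fin N) :
    weight α c f = ∑ k, α (f k) * c (f k) k := by
  rw [weight, Finset.sum_comm]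
  refine Finset.sum_congr rfl fun k _ => ?_
  rw [Finset.sum_eq_single (f k)]
  · simp [allocMat]
  · intro n _ hn
    simp [allocMat, Ne.symm hn]
  · simp

lemma weight_add {N K : ℕ} (α β : Fin N → ℝ) (c : Fin N → Fin K → ℝ) (f : Fin K → Fin N) :
    weight (α + β) c f = weight α c f + weight β c f := by
  simp [weight_eq, add_mul, Finset.sum_add_distrib]

lemma weight_smul {N K : ℕ} (a : ℝ) (α : Fin N → ℝ) (c : Fin N → Fin K → ℝ) (f : Fin K → Fin N) :
    weight (a • α) c f = a * weight α c f := by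
  simp only [weight_eq, Finset.mul_sum, Pi.smul_apply, smul_eq_mul]
  exact Finset.sum_congr rfl fun k _ => by ring

lemma weight_zero {N K : ℕ} (c : Fin N → Fin K → ℝ) (f : Fin K → Fin N) :
    weight (0 : Fin N → ℝ) c f = 0 := by
  simp [weight_eq]

/-- a per-column argmax assignment for `α` in channel state `s` -/
noncomputable def fstar {N K M : ℕ} [NeZero N] (α : Fin N → ℝ) (s : ChanState N K M)
    (k : Fin K) : Fin N :=
  (Finset.exists_max_image Finset.univ (fun n => α n * Cmat s n k)
    Finset.univ_nonempty).choose

lemma fstar_spec {N K M : ℕ} [NeZero N] (α : Fin N → ℝ) (s : ChanState N K M)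
    (k : Fin K) (n : Fin N) :
    α n * Cmat s n k ≤ α (fstar α s k) * Cmat s (fstar α s k) k := by
  have h := (Finset.exists_max_image Finset.univ (fun n => α n * Cmat s n k)
    Finset.univ_nonempty).choose_spec
  exact h.2 n (Finset.mem_univ n)

lemma maxWeight_eq_of_sig {N K M : ℕ} [NeZero N] {α β : Fin N → ℝ} (hβ : β ∈ sig M α)
    (s : ChanState N K M) :
    maxWeight β (Cmat s) = weight β (Cmat s) (fstar α s) := by
  apply le_antisymm
  · apply Finset.sup'_le
    intro f _
    rw [weight_eq, weight_eq]
    apply Finset.sum_le_sum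
    intro k _
    have harg := fstar_spec α s k (f k)
    have hm : ((s (fstar α s k) k : ℕ)) ≤ M := Nat.lt_succ_iff.mp (s (fstar α s k) k).isLt
    have hm' : ((s (f k) k : ℕ)) ≤ M := Nat.lt_succ_iff.mp (s (f k) k).isLt
    exact hβ (fstar α s k) (f k) _ _ hm hm' harg
  · exact Finset.le_sup' (weight β (Cmat s)) (Finset.mem_univ (fstar α s))

lemma bCoef_eq_of_sig {N K M : ℕ} [NeZero N] (π : ChanState N K M → ℝ) {α β : Fin N → ℝ}
    (hβ : β ∈ sig M α) :
    bCoef π β = ∑ s : ChanState N K M, π s * weight β (Cmat s) (fstar α s) := by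
  unfold bCoef
  exact Finset.sum_congr rfl fun s _ => by rw [maxWeight_eq_of_sig hβ s]

end Stmt13
namespace Stmt13

open Finset

lemma Wset_nonneg {N M : ℕ} {w : ℝ} (hw : w ∈ Wset N M) : 0 ≤ w := by
  obtain ⟨m, _, rfl⟩ := hw
  exact Finset.prod_nonneg fun j _ => Nat.cast_nonneg _

lemma zero_mem_Wset {N M : ℕ} (hN : 2 ≤ N) : (0 : ℝ) ∈ Wset N M := by
  refine ⟨fun _ => 0, fun _ => Nat.zero_le _, ?_⟩
  rw [Finset.prod_const]
  rw [Nat.cast_zero, zero_pow]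
  simp only [Finset.card_univ, Fintype.card_fin]
  omega

lemma getD_one_cases : ∀ (L : List ℕ) (t : ℕ), L.getD t 1 = 1 ∨ L.getD t 1 ∈ L := by
  intro L
  induction L with
  | nil => intro t; left; simp
  | cons a L ih =>
    intro t
    cases t with
    | zero => right; simp
    | succ t =>
      rcases ih t with h | h
      · left; simpa using h
      · right; simp only [List.getD_cons_succ]; exact List.mem_cons_of_mem a h

lemma prod_getD_eq : ∀ (L : List ℕ) (n : ℕ), L.length ≤ n →
    ∏ t : Fin n, ((L.getD (t : ℕ) 1 : ℕ) : ℝ) = (L.map (Nat.cast : ℕ → ℝ)).prod := by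
  intro L
  induction L with
  | nil => intro n _; simp
  | cons a L ih =>
    intro n hn
    cases n with
    | zero => simp at hn
    | succ n =>
      rw [List.map_cons, List.prod_cons, Fin.prod_univ_succ]
      congr 1
      exact ih n (by simpa using hn)

lemma listprod_mem_Wset {N M : ℕ} (hN : 2 ≤ N) (hM : 1 ≤ M) (L : List ℕ)
    (hlen : L.length ≤ N - 1) (hb : ∀ a ∈ L, a ≤ M) :
    (L.map (Nat.cast : ℕ → ℝ)).prod ∈ Wset N M := by
  refine ⟨fun t => L.getD (t : ℕ) 1, fun t => ?_, ?_⟩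
  · show L.getD (t : ℕ) 1 ≤ M
    rcases getD_one_cases L (t : ℕ) with h | h
    · omega
    · exact hb _ h
  · exact (prod_getD_eq L (N - 1) hlen).symm

end Stmt13
namespace Stmt13

open Finset

def Adj (M : ℕ) {N : ℕ} (α : Fin N → ℝ) (i j : Fin N) : Prop :=
  0 < α i ∧ 0 < α j ∧ ∃ m m' : ℕ, 1 ≤ m ∧ m ≤ M ∧ 1 ≤ m' ∧ m' ≤ M ∧
    α i * (m : ℝ) = α j * (m' : ℝ)

def Reach (M : ℕ) {N : ℕ} (α : Fin N → ℝ) (i j : Fin N) : Prop :=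
  Relation.ReflTransGen (Adj M α) i j

lemma reach_pos {M N : ℕ} {α : Fin N → ℝ} {i₀ j : Fin N} (h0 : 0 < α i₀)
    (h : Reach M α i₀ j) : 0 < α j := by
  induction h with
  | refl => exact h0
  | tail _ hbc _ => exact hbc.2.1

lemma cross {M N : ℕ} {α : Fin N → ℝ} {i₀ j' : Fin N} (h : Reach M α i₀ j') :
    ∀ U : Finset (Fin N), i₀ ∈ U → j' ∉ U →
      ∃ i ∈ U, ∃ j, j ∉ U ∧ Adj M α i j ∧ Reach M α i₀ j := by
  induction h with
  | refl => intro U hU hU'; exact absurd hU hU'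
  | @tail b c hab hbc ih =>
    intro U hU hU'
    by_cases hb : b ∈ U
    · exact ⟨b, hb, c, hU', hbc, Relation.ReflTransGen.tail hab hbc⟩
    · exact ih U hU hb

def Scal (M : ℕ) {N : ℕ} (α : Fin N → ℝ) (U : Finset (Fin N)) : Prop :=
  ∃ μ : ℝ, 0 < μ ∧ ∀ i ∈ U, ∃ L : List ℕ, L.length + 1 = U.card ∧
    (∀ a ∈ L, 1 ≤ a ∧ a ≤ M) ∧ μ * α i = (L.map (Nat.cast : ℕ → ℝ)).prod

lemma grow {M N : ℕ} {α : Fin N → ℝ} {i₀ : Fin N} :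
    ∀ (n : ℕ) (V U : Finset (Fin N)), (∀ j, j ∈ V ↔ Reach M α i₀ j) → i₀ ∈ U → U ⊆ V →
      V.card ≤ U.card + n → Scal M α U → Scal M α V := by
  intro n
  induction n with
  | zero =>
    intro V U _ _ hUV hcard hS
    rwa [Finset.eq_of_subset_of_card_le hUV (by omega)] at hS
  | succ n ih =>
    intro V U hV hU hUV hcard hS
    by_cases hle : V.card ≤ U.card
    · rwa [Finset.eq_of_subset_of_card_le hUV hle] at hS
    · have hss : U ⊂ V := Finset.ssubset_iff_subset_ne.mpr ⟨hUV, fun h => by subst h; omega⟩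
      obtain ⟨j', hj'V, hj'U⟩ := Finset.exists_of_ssubset hss
      obtain ⟨i, hiU, j, hjU, hadj, hreach⟩ := cross ((hV j').mp hj'V) U hU hj'U
      obtain ⟨μ, hμ, hL⟩ := hS
      obtain ⟨hpi, hpj, m, m', hm1, hmM, hm'1, hm'M, heq⟩ := hadj
      have hjV : j ∈ V := (hV j).mpr hreach
      have hins : insert j U ⊆ V := Finset.insert_subset hjV hUV
      have hcard' : (insert j U).card = U.card + 1 := Finset.card_insert_of_notMem hjU
      refine ih V (insert j U) hV (Finset.mem_insert_of_mem hU) hins (by omega) ?_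
      refine ⟨μ * m', by positivity, ?_⟩
      intro i' hi'
      rcases Finset.mem_insert.mp hi' with rfl | hi'U
      · obtain ⟨L, hlen, hb, hprod⟩ := hL i hiU
        refine ⟨m :: L, by simp [hcard']; omega, ?_, ?_⟩
        · intro a ha
          rcases List.mem_cons.mp ha with rfl | ha
          · exact ⟨hm1, hmM⟩
          · exact hb a ha
        · simp only [List.map_cons, List.prod_cons]
          calc μ * (m' : ℝ) * α i' = μ * (α i' * m') := by ring
            _ = μ * (α i * m) := by rw [← heq]
            _ = (m : ℝ) * (μ * α i) := by ring
            _ = (m : ℝ) * (L.map (Nat.cast : ℕ → ℝ)).prod := by rw [hprod]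
      · obtain ⟨L, hlen, hb, hprod⟩ := hL i' hi'U
        refine ⟨m' :: L, by simp [hcard']; omega, ?_, ?_⟩
        · intro a ha
          rcases List.mem_cons.mp ha with rfl | ha
          · exact ⟨hm'1, hm'M⟩
          · exact hb a ha
        · simp only [List.map_cons, List.prod_cons]
          calc μ * (m' : ℝ) * α i' = (m' : ℝ) * (μ * α i') := by ring
            _ = (m' : ℝ) * (L.map (Nat.cast : ℕ → ℝ)).prod := by rw [hprod]

end Stmt13
namespace Stmt13

open Finset

def hasDecomp (M : ℕ) {N : ℕ} (α : Fin N → ℝ) : Prop :=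
  ∃ l : List (ℝ × (Fin N → ℝ)),
    (∀ q ∈ l, 0 ≤ q.1 ∧ q.2 ∈ sig M α ∧ ∀ n, q.2 n ∈ Wset N M) ∧
    α = (l.map fun q => q.1 • q.2).sum

lemma hasDecomp_single {M N : ℕ} {α β : Fin N → ℝ} {c : ℝ} (hc : 0 ≤ c)
    (hs : β ∈ sig M α) (hW : ∀ n, β n ∈ Wset N M) (h : α = c • β) : hasDecomp M α := by
  refine ⟨[(c, β)], ?_, ?_⟩
  · intro q hq
    rcases List.mem_singleton.mp hq with rfl
    exact ⟨hc, hs, hW⟩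
  · simpa using h

lemma map_scale_sum {N : ℕ} (a : ℝ) (l : List (ℝ × (Fin N → ℝ))) :
    ((l.map fun q => (a * q.1, q.2)).map fun q => q.1 • q.2).sum
      = a • (l.map fun q => q.1 • q.2).sum := by
  rw [List.map_map, List.smul_sum, List.map_map]
  refine congrArg List.sum (List.map_congr_left fun q _ => ?_)
  simp [Function.comp, smul_smul]

lemma hasDecomp_comb {M N : ℕ} {α α₁ α₂ : Fin N → ℝ} {a b : ℝ} (ha : 0 ≤ a) (hb : 0 ≤ b)
    (h1 : α₁ ∈ sig M α) (h2 : α₂ ∈ sig M α)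
    (hd1 : hasDecomp M α₁) (hd2 : hasDecomp M α₂)
    (hsum : α = a • α₁ + b • α₂) : hasDecomp M α := by
  obtain ⟨l₁, hl₁, he₁⟩ := hd1
  obtain ⟨l₂, hl₂, he₂⟩ := hd2
  refine ⟨(l₁.map fun q => (a * q.1, q.2)) ++ (l₂.map fun q => (b * q.1, q.2)), ?_, ?_⟩
  · intro q hq
    rcases List.mem_append.mp hq with hq | hq
    · obtain ⟨p, hp, rfl⟩ := List.mem_map.mp hq
      obtain ⟨hp1, hp2, hp3⟩ := hl₁ p hp
      exact ⟨mul_nonneg ha hp1, sig_trans h1 hp2, hp3⟩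
    · obtain ⟨p, hp, rfl⟩ := List.mem_map.mp hq
      obtain ⟨hp1, hp2, hp3⟩ := hl₂ p hp
      exact ⟨mul_nonneg hb hp1, sig_trans h2 hp2, hp3⟩
  · rw [List.map_append, List.sum_append, map_scale_sum, map_scale_sum, ← he₁, ← he₂]
    exact hsum

end Stmt13
namespace Stmt13

open Finset

lemma main_decomp {M N : ℕ} (hN : 2 ≤ N) (hM : 1 ≤ M) :
    ∀ α : Fin N → ℝ, (∀ n, 0 ≤ α n) → hasDecomp M α := by
  classical
  suffices H : ∀ d : ℕ, ∀ α : Fin N → ℝ, dcount M α = d → (∀ n, 0 ≤ α n) → hasDecomp M α by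
    intro α hα; exact H _ α rfl hα
  intro d
  induction d using Nat.strong_induction_on with
  | _ d IH =>
  intro α hdc hα
  by_cases hex : ∃ i₀, 0 < α i₀
  case neg =>
    push_neg at hex
    have hz : α = 0 := funext fun n => le_antisymm (hex n) (hα n)
    exact ⟨[], by simp, by simp [hz]⟩
  obtain ⟨i₀, h0⟩ := hex
  set V : Finset (Fin N) := Finset.univ.filter (fun i => Reach M α i₀ i) with hVdef
  have hVmem : ∀ j, j ∈ V ↔ Reach M α i₀ j := fun j => by simp [hVdef]
  have hi₀V : i₀ ∈ V := (hVmem i₀).mpr Relation.ReflTransGen.refl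
  have hVpos : ∀ i ∈ V, 0 < α i := fun i hi => reach_pos h0 ((hVmem i).mp hi)
  by_cases hsup : ∀ i, 0 < α i → i ∈ V
  case pos =>
    -- single component: α is a positive multiple of a W-vector
    have hbase : Scal M α ({i₀} : Finset (Fin N)) := by
      refine ⟨(α i₀)⁻¹, by positivity, ?_⟩
      intro i hi
      rcases Finset.mem_singleton.mp hi with rfl
      exact ⟨[], by simp, by simp, by simp [inv_mul_cancel₀ h0.ne']⟩
    have hscal : Scal M α V := grow V.card V {i₀} hVmem (Finset.mem_singleton_self i₀)
      (Finset.singleton_subset_iff.mpr hi₀V) (by simp) hbase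
    obtain ⟨μ, hμ, hL⟩ := hscal
    have hVcard : V.card ≤ N := by
      have := Finset.card_le_univ V
      simpa using this
    refine hasDecomp_single (c := μ⁻¹) (by positivity)
      (smul_mem_sig (self_mem_sig α) hμ.le) ?_ ?_
    · intro n
      by_cases hn : n ∈ V
      · obtain ⟨L, hlen, hb, hprod⟩ := hL n hn
        have : (μ • α) n = (L.map (Nat.cast : ℕ → ℝ)).prod := by
          simpa using hprod
        rw [this]
        exact listprod_mem_Wset hN hM L (by omega) (fun a ha => (hb a ha).2)
      · have hz : α n = 0 := by
          by_contra h
          exact hn (hsup n (lt_of_le_of_ne (hα n) (Ne.symm h)))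
        have : (μ • α) n = 0 := by simp [hz]
        rw [this]
        exact zero_mem_Wset hN
    · funext n
      show α n = (μ⁻¹ • μ • α) n
      simp only [Pi.smul_apply, smul_eq_mul]
      rw [← mul_assoc, inv_mul_cancel₀ hμ.ne', one_mul]
  -- several components
  push_neg at hsup
  obtain ⟨j₁, hj₁pos, hj₁V⟩ := hsup
  set D : Finset (Fin N × Fin N × Fin (M+1) × Fin (M+1)) := Finset.univ.filter (fun q =>
    q.1 ∈ V ∧ q.2.1 ∉ V ∧ 1 ≤ (q.2.2.1 : ℕ) ∧ 1 ≤ (q.2.2.2 : ℕ) ∧ 0 < α q.2.1 ∧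
    α q.2.1 * ((q.2.2.2 : ℕ) : ℝ) ≤ α q.1 * ((q.2.2.1 : ℕ) : ℝ)) with hDdef
  set Up : Finset (Fin N × Fin N × Fin (M+1) × Fin (M+1)) := Finset.univ.filter (fun q =>
    q.1 ∉ V ∧ q.2.1 ∈ V ∧ 1 ≤ (q.2.2.2 : ℕ) ∧
    α q.2.1 * ((q.2.2.2 : ℕ) : ℝ) ≤ α q.1 * ((q.2.2.1 : ℕ) : ℝ)) with hUpdef
  set rD : Fin N × Fin N × Fin (M+1) × Fin (M+1) → ℝ := fun q =>
    α q.2.1 * ((q.2.2.2 : ℕ) : ℝ) / (α q.1 * ((q.2.2.1 : ℕ) : ℝ)) with hrDdef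
  set rU : Fin N × Fin N × Fin (M+1) × Fin (M+1) → ℝ := fun q =>
    α q.1 * ((q.2.2.1 : ℕ) : ℝ) / (α q.2.1 * ((q.2.2.2 : ℕ) : ℝ)) with hrUdef
  -- facts about D
  have hDfact : ∀ q ∈ D, q.1 ∈ V ∧ q.2.1 ∉ V ∧ 0 < α q.1 * ((q.2.2.1 : ℕ) : ℝ) ∧
      0 < α q.2.1 * ((q.2.2.2 : ℕ) : ℝ) ∧
      α q.2.1 * ((q.2.2.2 : ℕ) : ℝ) < α q.1 * ((q.2.2.1 : ℕ) : ℝ) := by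
    intro q hq
    rw [hDdef, Finset.mem_filter] at hq
    obtain ⟨-, h1, h2, h3, h4, h5, h6⟩ := hq
    have hq1pos : 0 < α q.1 := hVpos _ h1
    have hd1 : 0 < α q.1 * ((q.2.2.1 : ℕ) : ℝ) := by
      have : (1 : ℝ) ≤ ((q.2.2.1 : ℕ) : ℝ) := by exact_mod_cast h3
      nlinarith
    have hd2 : 0 < α q.2.1 * ((q.2.2.2 : ℕ) : ℝ) := by
      have : (1 : ℝ) ≤ ((q.2.2.2 : ℕ) : ℝ) := by exact_mod_cast h4
      nlinarith
    refine ⟨h1, h2, hd1, hd2, lt_of_le_of_ne h6 ?_⟩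
    intro heq
    apply h2
    refine (hVmem q.2.1).mpr (Relation.ReflTransGen.tail ((hVmem q.1).mp h1) ?_)
    exact ⟨hq1pos, h5, (q.2.2.1 : ℕ), (q.2.2.2 : ℕ), h3,
      Nat.lt_succ_iff.mp q.2.2.1.isLt, h4, Nat.lt_succ_iff.mp q.2.2.2.isLt, heq.symm⟩
  -- facts about Up
  have hUpfact : ∀ q ∈ Up, q.1 ∉ V ∧ q.2.1 ∈ V ∧ 0 < α q.1 * ((q.2.2.1 : ℕ) : ℝ) ∧
      0 < α q.2.1 * ((q.2.2.2 : ℕ) : ℝ) ∧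
      α q.2.1 * ((q.2.2.2 : ℕ) : ℝ) < α q.1 * ((q.2.2.1 : ℕ) : ℝ) := by
    intro q hq
    rw [hUpdef, Finset.mem_filter] at hq
    obtain ⟨-, h1, h2, h3, h4⟩ := hq
    have hq2pos : 0 < α q.2.1 := hVpos _ h2
    have hd2 : 0 < α q.2.1 * ((q.2.2.2 : ℕ) : ℝ) := by
      have : (1 : ℝ) ≤ ((q.2.2.2 : ℕ) : ℝ) := by exact_mod_cast h3
      nlinarith
    have hd1 : 0 < α q.1 * ((q.2.2.1 : ℕ) : ℝ) := lt_of_lt_of_le hd2 h4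
    have hm1 : 1 ≤ (q.2.2.1 : ℕ) := by
      by_contra h
      have : (q.2.2.1 : ℕ) = 0 := by omega
      rw [this] at hd1; simp at hd1
    have hq1pos : 0 < α q.1 := by
      rcases (mul_pos_iff.mp hd1) with ⟨h, _⟩ | ⟨_, h⟩
      · exact h
      · exfalso; have : (0:ℝ) ≤ ((q.2.2.1 : ℕ) : ℝ) := Nat.cast_nonneg _; linarith
    refine ⟨h1, h2, hd1, hd2, lt_of_le_of_ne h4 ?_⟩
    intro heq
    apply h1
    refine (hVmem q.1).mpr (Relation.ReflTransGen.tail ((hVmem q.2.1).mp h2) ?_)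
    exact ⟨hq2pos, hq1pos, (q.2.2.2 : ℕ), (q.2.2.1 : ℕ), h3,
      Nat.lt_succ_iff.mp q.2.2.2.isLt, hm1, Nat.lt_succ_iff.mp q.2.2.1.isLt, heq⟩
  set tlo : ℝ := (insert 0 (D.image rD)).max' (Finset.insert_nonempty _ _) with htlodef
  have htlo0 : 0 ≤ tlo := Finset.le_max' _ 0 (Finset.mem_insert_self _ _)
  have htlo_lt1 : tlo < 1 := by
    rw [htlodef]
    rw [Finset.max'_lt_iff]
    intro y hy
    rcases Finset.mem_insert.mp hy with rfl | hy
    · norm_num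
    · obtain ⟨q, hq, rfl⟩ := Finset.mem_image.mp hy
      obtain ⟨-, -, hd1, -, hstrict⟩ := hDfact q hq
      rw [hrDdef]
      exact (div_lt_one hd1).mpr hstrict
  have htlo_down : ∀ q ∈ D,
      α q.2.1 * ((q.2.2.2 : ℕ) : ℝ) ≤ tlo * (α q.1 * ((q.2.2.1 : ℕ) : ℝ)) := by
    intro q hq
    obtain ⟨-, -, hd1, -, -⟩ := hDfact q hq
    have hle : rD q ≤ tlo :=
      Finset.le_max' _ _ (Finset.mem_insert_of_mem (Finset.mem_image_of_mem _ hq))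
    rw [hrDdef] at hle
    calc α q.2.1 * ((q.2.2.2 : ℕ) : ℝ)
        = α q.2.1 * ((q.2.2.2 : ℕ) : ℝ) / (α q.1 * ((q.2.2.1 : ℕ) : ℝ))
          * (α q.1 * ((q.2.2.1 : ℕ) : ℝ)) := by
          field_simp
          rw [mul_assoc (α q.2.1 * _), mul_div_assoc, div_self hd1.ne', mul_one]
      _ ≤ tlo * (α q.1 * ((q.2.2.1 : ℕ) : ℝ)) := by
          exact mul_le_mul_of_nonneg_right hle hd1.le
  have htlo_up : ∀ q ∈ Up,
      tlo * (α q.2.1 * ((q.2.2.2 : ℕ) : ℝ)) ≤ α q.1 * ((q.2.2.1 : ℕ) : ℝ) := by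
    intro q hq
    obtain ⟨-, -, -, hd2, hstrict⟩ := hUpfact q hq
    nlinarith
  -- the scaled vector
  have hαt_sig : ∀ t : ℝ, 0 ≤ t →
      (∀ q ∈ D, α q.2.1 * ((q.2.2.2 : ℕ) : ℝ) ≤ t * (α q.1 * ((q.2.2.1 : ℕ) : ℝ))) →
      (∀ q ∈ Up, t * (α q.2.1 * ((q.2.2.2 : ℕ) : ℝ)) ≤ α q.1 * ((q.2.2.1 : ℕ) : ℝ)) →
      (fun i => if i ∈ V then t * α i else α i) ∈ sig M α := by
    intro t ht hdown hup i j m m' hm hm' hij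
    simp only
    by_cases hiV : i ∈ V <;> by_cases hjV : j ∈ V <;>
      simp only [hiV, hjV, if_true, if_false]
    · nlinarith
    · -- i ∈ V, j ∉ V
      by_cases hj0 : α j * (m' : ℝ) ≤ 0
      · have h1 : 0 ≤ α i := (hVpos i hiV).le
        have h2 : (0:ℝ) ≤ (m : ℝ) := Nat.cast_nonneg _
        exact le_trans hj0 (mul_nonneg (mul_nonneg ht h1) h2)
      · push_neg at hj0
        have hjpos : 0 < α j := by
          rcases mul_pos_iff.mp hj0 with ⟨h, _⟩ | ⟨_, h⟩
          · exact h
          · exfalso; have : (0:ℝ) ≤ ((m' : ℕ) : ℝ) := Nat.cast_nonneg _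
            simp at this ⊢; linarith
        have hm'1 : 1 ≤ m' := by
          by_contra h
          have : m' = 0 := by omega
          rw [this] at hj0; simp at hj0
        have hq : (i, j, (⟨m, by omega⟩ : Fin (M+1)), (⟨m', by omega⟩ : Fin (M+1))) ∈ D := by
          rw [hDdef, Finset.mem_filter]
          refine ⟨Finset.mem_univ _, hiV, hjV, ?_, ?_, hjpos, ?_⟩
          · show 1 ≤ m
            by_contra h
            have : m = 0 := by omega
            rw [this] at hij; simp at hij; linarith
          · exact hm'1
          · exact hij
        have := hdown _ hq
        simp only at this
        linarith [this]
    · -- i ∉ V, j ∈ V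
      by_cases hm'0 : m' = 0
      · subst hm'0
        simp only [Nat.cast_zero, mul_zero]
        have h2 : (0:ℝ) ≤ (m : ℝ) := Nat.cast_nonneg _
        nlinarith [hα i]
      · have hq : (i, j, (⟨m, by omega⟩ : Fin (M+1)), (⟨m', by omega⟩ : Fin (M+1))) ∈ Up := by
          rw [hUpdef, Finset.mem_filter]
          exact ⟨Finset.mem_univ _, hiV, hjV, by simpa using Nat.one_le_iff_ne_zero.mpr hm'0, hij⟩
        have := hup _ hq
        simp only at this
        linarith [this]
    · exact hij
  set βlo : Fin N → ℝ := fun i => if i ∈ V then tlo * α i else α i with hβlodef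
  have hβlo_sig : βlo ∈ sig M α := hαt_sig tlo htlo0 htlo_down htlo_up
  have hβlo_nonneg : ∀ n, 0 ≤ βlo n := by
    intro n
    rw [hβlodef]
    dsimp only
    by_cases h : n ∈ V
    · rw [if_pos h]; exact mul_nonneg htlo0 (hα n)
    · rw [if_neg h]; exact hα n
  have hβlo_dlt : dcount M βlo < d := by
    rw [← hdc]
    have hcase : tlo = 0 ∨ tlo ∈ D.image rD := by
      have hmem := Finset.max'_mem (insert 0 (D.image rD)) (Finset.insert_nonempty _ _)
      rw [← htlodef] at hmem
      rcases Finset.mem_insert.mp hmem with h | h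
      · exact Or.inl h
      · exact Or.inr h
    rcases hcase with h | h
    · refine dcount_lt hβlo_sig i₀ i₀ 1 0 hM (Nat.zero_le _) (by simpa using h0) ?_
      rw [hβlodef]
      simp [hi₀V, h]
    · obtain ⟨q, hq, hrq⟩ := Finset.mem_image.mp h
      obtain ⟨h1, h2, hd1, hd2, hstrict⟩ := hDfact q hq
      refine dcount_lt hβlo_sig q.1 q.2.1 (q.2.2.1 : ℕ) (q.2.2.2 : ℕ)
        (Nat.lt_succ_iff.mp q.2.2.1.isLt) (Nat.lt_succ_iff.mp q.2.2.2.isLt) hstrict ?_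
      rw [hβlodef]
      dsimp only
      rw [if_pos h1, if_neg h2, not_lt]
      have hkey : tlo * (α q.1 * ((q.2.2.1 : ℕ) : ℝ)) = α q.2.1 * ((q.2.2.2 : ℕ) : ℝ) := by
        rw [← hrq, hrDdef]
        field_simp
        rw [mul_assoc (α q.2.1 * _), mul_div_assoc, div_self hd1.ne', mul_one]
      linarith [hkey]
  by_cases hUne : Up.Nonempty
  case pos =>
    set thi : ℝ := (Up.image rU).min' (hUne.image _) with hthidef
    have hthi_mem : thi ∈ Up.image rU := by rw [hthidef]; exact Finset.min'_mem _ _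
    obtain ⟨qU, hqU, hrqU⟩ := Finset.mem_image.mp hthi_mem
    have hthi_gt1 : 1 < thi := by
      rw [← hrqU, hrUdef]
      obtain ⟨-, -, hd1, hd2, hstrict⟩ := hUpfact qU hqU
      exact (one_lt_div hd2).mpr hstrict
    have hup_thi : ∀ q ∈ Up,
        thi * (α q.2.1 * ((q.2.2.2 : ℕ) : ℝ)) ≤ α q.1 * ((q.2.2.1 : ℕ) : ℝ) := by
      intro q hq
      obtain ⟨-, -, hd1, hd2, -⟩ := hUpfact q hq
      have hle : thi ≤ rU q := by
        rw [hthidef]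
        exact Finset.min'_le _ _ (Finset.mem_image_of_mem _ hq)
      rw [hrUdef] at hle
      calc thi * (α q.2.1 * ((q.2.2.2 : ℕ) : ℝ))
          ≤ (α q.1 * ((q.2.2.1 : ℕ) : ℝ) / (α q.2.1 * ((q.2.2.2 : ℕ) : ℝ)))
            * (α q.2.1 * ((q.2.2.2 : ℕ) : ℝ)) := mul_le_mul_of_nonneg_right hle hd2.le
        _ = α q.1 * ((q.2.2.1 : ℕ) : ℝ) := by
          field_simp
          rw [mul_assoc (α q.1 * _), mul_div_assoc, div_self hd2.ne', mul_one]
    have hdown_thi : ∀ q ∈ D,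
        α q.2.1 * ((q.2.2.2 : ℕ) : ℝ) ≤ thi * (α q.1 * ((q.2.2.1 : ℕ) : ℝ)) := by
      intro q hq
      obtain ⟨-, -, hd1, -, hstrict⟩ := hDfact q hq
      nlinarith
    set βhi : Fin N → ℝ := fun i => if i ∈ V then thi * α i else α i with hβhidef
    have hβhi_sig : βhi ∈ sig M α := hαt_sig thi (by linarith) hdown_thi hup_thi
    have hβhi_nonneg : ∀ n, 0 ≤ βhi n := by
      intro n
      rw [hβhidef]
      dsimp only
      by_cases h : n ∈ V
      · rw [if_pos h]; exact mul_nonneg (by linarith) (hα n)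
      · rw [if_neg h]; exact hα n
    have hβhi_dlt : dcount M βhi < d := by
      rw [← hdc]
      obtain ⟨h1, h2, hd1, hd2, hstrict⟩ := hUpfact qU hqU
      refine dcount_lt hβhi_sig qU.1 qU.2.1 (qU.2.2.1 : ℕ) (qU.2.2.2 : ℕ)
        (Nat.lt_succ_iff.mp qU.2.2.1.isLt) (Nat.lt_succ_iff.mp qU.2.2.2.isLt) hstrict ?_
      rw [hβhidef]
      dsimp only
      rw [if_neg h1, if_pos h2, not_lt]
      have hkey : thi * (α qU.2.1 * ((qU.2.2.2 : ℕ) : ℝ)) = α qU.1 * ((qU.2.2.1 : ℕ) : ℝ) := by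
        rw [← hrqU, hrUdef]
        field_simp
        rw [mul_assoc (α qU.1 * _), mul_div_assoc, div_self hd2.ne', mul_one]
      linarith [hkey]
    have hden : 0 < thi - tlo := by linarith
    set a : ℝ := (thi - 1) / (thi - tlo) with hadef
    have ha0 : 0 ≤ a := div_nonneg (by linarith) hden.le
    have ha1 : a ≤ 1 := (div_le_one hden).mpr (by linarith)
    have hkey : a * tlo + (1 - a) * thi = 1 := by
      rw [hadef]
      field_simp
      ring
    have hsum : α = a • βlo + (1 - a) • βhi := by
      funext n
      simp only [Pi.add_apply, Pi.smul_apply, smul_eq_mul, hβlodef, hβhidef]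
      by_cases h : n ∈ V
      · rw [if_pos h, if_pos h]
        linear_combination (-(α n)) * hkey
      · rw [if_neg h, if_neg h]
        ring
    exact hasDecomp_comb (a := a) (b := 1 - a) ha0 (by linarith) hβlo_sig hβhi_sig
      (IH _ hβlo_dlt βlo rfl hβlo_nonneg) (IH _ hβhi_dlt βhi rfl hβhi_nonneg) hsum
  case neg =>
    set χ : Fin N → ℝ := fun i => if i ∈ V then α i else 0 with hχdef
    have hχ_sig : χ ∈ sig M α := by
      intro i j m m' hm hm' hij
      rw [hχdef]
      dsimp only
      by_cases hiV : i ∈ V <;> by_cases hjV : j ∈ V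
      · rw [if_pos hiV, if_pos hjV]; exact hij
      · rw [if_pos hiV, if_neg hjV]
        have h00 : (0:ℝ) * (m' : ℝ) = 0 := by ring
        rw [h00]
        exact mul_nonneg (hα i) (Nat.cast_nonneg m)
      · rw [if_neg hiV, if_pos hjV]
        by_cases hm'0 : m' = 0
        · subst hm'0
          simp
        · exfalso
          apply hUne
          refine ⟨(i, j, (⟨m, by omega⟩ : Fin (M+1)), (⟨m', by omega⟩ : Fin (M+1))), ?_⟩
          rw [hUpdef, Finset.mem_filter]
          exact ⟨Finset.mem_univ _, hiV, hjV, by simpa using Nat.one_le_iff_ne_zero.mpr hm'0, hij⟩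
      · rw [if_neg hiV, if_neg hjV]
        simp
    have hχ_nonneg : ∀ n, 0 ≤ χ n := by
      intro n
      rw [hχdef]
      dsimp only
      by_cases h : n ∈ V
      · rw [if_pos h]; exact hα n
      · rw [if_neg h]
    have hχ_dlt : dcount M χ < d := by
      rw [← hdc]
      refine dcount_lt hχ_sig j₁ j₁ 1 0 hM (Nat.zero_le _) (by simpa using hj₁pos) ?_
      rw [hχdef]
      simp [hj₁V]
    have hsum : α = (1:ℝ) • βlo + (1 - tlo) • χ := by
      funext n
      simp only [Pi.add_apply, Pi.smul_apply, smul_eq_mul, hβlodef, hχdef]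
      by_cases h : n ∈ V
      · rw [if_pos h, if_pos h]; ring
      · rw [if_neg h, if_neg h]; ring
    exact hasDecomp_comb (a := 1) (b := 1 - tlo) zero_le_one (by linarith) hβlo_sig hχ_sig
      (IH _ hβlo_dlt βlo rfl hβlo_nonneg) (IH _ hχ_dlt χ rfl hχ_nonneg) hsum

end Stmt13
namespace Stmt13

open Finset

lemma sum_le_bCoef {N K M : ℕ} [NeZero N] [NeZero K]
    (π : ChanState N K M → ℝ) (x : Fin N → ℝ)
    (hx : ∀ β : Fin N → ℝ, (∀ n, β n ∈ Wset N M) → ∑ n, β n * x n ≤ bCoef π β)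
    (α : Fin N → ℝ) (hd : hasDecomp M α) :
    ∑ n, α n * x n ≤ bCoef π α := by
  obtain ⟨l, hl, he⟩ := hd
  have key : ∀ l' : List (ℝ × (Fin N → ℝ)),
      (∀ q ∈ l', 0 ≤ q.1 ∧ q.2 ∈ sig M α ∧ ∀ n, q.2 n ∈ Wset N M) →
      ∑ n, ((l'.map fun q => q.1 • q.2).sum : Fin N → ℝ) n * x n ≤
        ∑ s : ChanState N K M,
          π s * weight ((l'.map fun q => q.1 • q.2).sum) (Cmat s) (fstar α s) := by
    intro l'
    induction l' with
    | nil => intro _; simp [weight_zero]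
    | cons q l' ih =>
      intro hq
      obtain ⟨hq1, hq2, hq3⟩ := hq q List.mem_cons_self
      have ih' := ih (fun p hp => hq p (List.mem_cons_of_mem q hp))
      simp only [List.map_cons, List.sum_cons]
      have lhs_eq : ∑ n, (((q.1 • q.2) + (l'.map fun q => q.1 • q.2).sum : Fin N → ℝ) n) * x n
          = q.1 * ∑ n, q.2 n * x n
            + ∑ n, ((l'.map fun q => q.1 • q.2).sum : Fin N → ℝ) n * x n := by
        rw [Finset.mul_sum, ← Finset.sum_add_distrib]
        refine Finset.sum_congr rfl fun n _ => ?_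
        simp only [Pi.add_apply, Pi.smul_apply, smul_eq_mul]
        ring
      have rhs_eq : ∑ s : ChanState N K M,
            π s * weight ((q.1 • q.2) + (l'.map fun q => q.1 • q.2).sum) (Cmat s) (fstar α s)
          = q.1 * ∑ s : ChanState N K M, π s * weight q.2 (Cmat s) (fstar α s)
            + ∑ s : ChanState N K M,
              π s * weight ((l'.map fun q => q.1 • q.2).sum) (Cmat s) (fstar α s) := by
        rw [Finset.mul_sum, ← Finset.sum_add_distrib]
        refine Finset.sum_congr rfl fun s _ => ?_
        rw [weight_add, weight_smul]
        ring
      rw [lhs_eq, rhs_eq]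
      have h1 : q.1 * ∑ n, q.2 n * x n
          ≤ q.1 * ∑ s : ChanState N K M, π s * weight q.2 (Cmat s) (fstar α s) := by
        rw [← bCoef_eq_of_sig π hq2]
        exact mul_le_mul_of_nonneg_left (hx q.2 hq3) hq1
      exact add_le_add h1 ih'
  have hkey := key l hl
  rw [← he] at hkey
  calc ∑ n, α n * x n
      ≤ ∑ s : ChanState N K M, π s * weight α (Cmat s) (fstar α s) := hkey
    _ = bCoef π α := (bCoef_eq_of_sig π (self_mem_sig α)).symm

end Stmt13


/-- the region cut out (within the nonnegative orthant) by the
inequalities Σ_n α_n x_n ≤ b(α) over all nonnegative weight vectors α coincides with the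
region cut out by the finitely many weight vectors in W^N. -/
theorem stmt_13
    {N K M : ℕ} (hN : 2 ≤ N) [NeZero N] [NeZero K] (hM : 1 ≤ M)
    (π : ChanState N K M → ℝ) (hπ0 : ∀ s, 0 ≤ π s) (hπ1 : ∑ s : ChanState N K M, π s = 1) :
    {x : Fin N → ℝ | (∀ n, 0 ≤ x n) ∧
        ∀ α : Fin N → ℝ, (∀ n, 0 ≤ α n) → ∑ n, α n * x n ≤ bCoef π α}
      = {x : Fin N → ℝ | (∀ n, 0 ≤ x n) ∧
          ∀ α : Fin N → ℝ, (∀ n, α n ∈ Wset N M) → ∑ n, α n * x n ≤ bCoef π α} := by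
  ext x
  simp only [Set.mem_setOf_eq]
  constructor
  · rintro ⟨hx0, hx⟩
    exact ⟨hx0, fun α hαW => hx α (fun n => Stmt13.Wset_nonneg (hαW n))⟩
  · rintro ⟨hx0, hx⟩
    refine ⟨hx0, fun α hα0 => ?_⟩
    exact Stmt13.sum_le_bCoef π x (fun β hβ => hx β hβ) α (Stmt13.main_decomp hN hM α hα0)
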